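/- Let G = (V, E) be a finite connected graph with N vertices and assume 1/2 < ε < 1. Then μ_ε(G) = N (equivalently, there exists an injective ε-stable configuration η : V → [0,1]) if and only if the graph G is bipartite. -/

import Mathlib

open Set

/-- A configuration `η` is `ε`-stable for the graph `G` if along every edge the
opinions either agree or differ by more than `ε`. -/
def IsStable {V : Type*} (G : SimpleGraph V) (ε : ℝ) (η : V → ℝ) : Prop :=
  ∀ ⦃x y : V⦄, G.Adj x y → η x = η y ∨ ε < |η x - η y|

/-- The `ε`-opinion index of `G`: the maximum number of distinct opinions taken
by an `ε`-stable configuration `η : V → [0,1]`. -/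
noncomputable def opinionIndex {V : Type*} (G : SimpleGraph V) (ε : ℝ) : ℕ :=
  sSup {n : ℕ | ∃ η : V → ℝ,
    (∀ x, η x ∈ Set.Icc (0 : ℝ) 1) ∧ IsStable G ε η ∧ (Set.range η).ncard = n}
theorem stmt4 {V : Type*} [Fintype V] (G : SimpleGraph V) (hG : G.Connected)
    (ε : ℝ) (h1 : 1 / 2 < ε) (h2 : ε < 1) :
    opinionIndex G ε = Fintype.card V ↔ G.Colorable 2 := by
  classical
  have hVne : Nonempty V := hG.nonempty
  have hN : 0 < Fintype.card V := Fintype.card_pos_iff.mpr hVne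
  set S : Set ℕ := {n : ℕ | ∃ η : V → ℝ,
    (∀ x, η x ∈ Set.Icc (0 : ℝ) 1) ∧ IsStable G ε η ∧ (Set.range η).ncard = n} with hSdef
  have hoi : opinionIndex G ε = sSup S := rfl
  have hrange : ∀ η : V → ℝ, (Set.range η).ncard = (Finset.univ.image η).card := by
    intro η
    rw [← Set.ncard_coe_finset]
    congr 1
    ext z; simp
  have hbdd : ∀ n ∈ S, n ≤ Fintype.card V := by
    rintro n ⟨η, -, -, hn⟩
    rw [← hn, hrange]
    exact le_trans Finset.card_image_le (le_of_eq Finset.card_univ)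
  have hne : S.Nonempty := by
    refine ⟨1, fun _ => 0, by simp, fun x y _ => Or.inl rfl, ?_⟩
    simp [Set.range_const]
  constructor
  · intro h
    have hmem : Fintype.card V ∈ S := by
      have hm := Nat.sSup_mem hne ⟨Fintype.card V, fun n hn => hbdd n hn⟩
      rw [← hoi, h] at hm
      exact hm
    obtain ⟨η, hicc, hst, hcard⟩ := hmem
    have hinj : Function.Injective η := by
      rw [hrange] at hcard
      have hio : Set.InjOn η ↑(Finset.univ : Finset V) :=
        Finset.card_image_iff.mp (by rw [hcard, Finset.card_univ])
      intro a b hab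
      exact hio (Finset.mem_coe.mpr (Finset.mem_univ a)) (Finset.mem_coe.mpr (Finset.mem_univ b)) hab
    refine ⟨SimpleGraph.Coloring.mk (fun x => if η x ≤ 1/2 then 0 else 1) ?_⟩
    intro x y hxy
    have hne' : η x ≠ η y := hinj.ne hxy.ne
    rcases hst hxy with h' | h'
    · exact absurd h' hne'
    · have hx := hicc x; have hy := hicc y
      simp only [Set.mem_Icc] at hx hy
      have hε : (1:ℝ)/2 < |η x - η y| := lt_trans h1 h'
      by_cases hxh : η x ≤ 1/2 <;> by_cases hyh : η y ≤ 1/2 <;>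
        simp only [hxh, hyh, if_pos, if_neg, not_true, not_false_iff] <;>
        first
          | decide
          | ((try push_neg at hxh); (try push_neg at hyh);
             rcases abs_cases (η x - η y) with ⟨he, _⟩ | ⟨he, _⟩ <;> rw [he] at hε <;> linarith)
  · intro hcol
    obtain ⟨C⟩ := hcol
    have hNpos : (0:ℝ) < (Fintype.card V : ℝ) := by exact_mod_cast hN
    set δ : ℝ := (1 - ε)/3 with hδdef
    have hδpos : 0 < δ := by rw [hδdef]; linarith
    have hδ6 : δ ≤ 1/6 := by rw [hδdef]; linarith
    set e := Fintype.equivFin V with hedef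
    set a : V → ℝ := fun x => δ * ((e x : ℕ) : ℝ) / (Fintype.card V : ℝ) with hadef
    have ha : ∀ x, 0 ≤ a x ∧ a x < δ := by
      intro x
      have hlt : (((e x : Fin (Fintype.card V)) : ℕ) : ℝ) < (Fintype.card V : ℝ) := by
        exact_mod_cast (e x).isLt
      constructor
      · positivity
      · rw [hadef, div_lt_iff₀ hNpos]
        nlinarith
    set η : V → ℝ := fun x => if C x = 0 then a x else 1 - a x with hηdef
    have hinj : Function.Injective η := by
      intro x y hxy
      apply e.injective
      apply Fin.ext
      have hax := ha x; have hay := ha y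
      by_cases hcx : C x = 0 <;> by_cases hcy : C y = 0 <;>
        simp only [hηdef, hcx, hcy, if_pos, if_neg, not_false_iff] at hxy
      · have : ((e x : ℕ) : ℝ) = ((e y : ℕ) : ℝ) := by
          rw [hadef] at hxy
          field_simp at hxy
          linarith
        exact_mod_cast this
      · exfalso; rw [hadef] at hxy; linarith [hax.1, hax.2, hay.1, hay.2]
      · exfalso; rw [hadef] at hxy; linarith [hax.1, hax.2, hay.1, hay.2]
      · have : ((e x : ℕ) : ℝ) = ((e y : ℕ) : ℝ) := by
          have hxy' : a x = a y := by linarith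
          rw [hadef] at hxy'
          field_simp at hxy'
          linarith
        exact_mod_cast this
    have hmem : Fintype.card V ∈ S := by
      refine ⟨η, ?_, ?_, ?_⟩
      · intro x
        have hax := ha x
        by_cases hcx : C x = 0 <;>
          simp only [hηdef, hcx, if_pos, if_neg, not_false_iff, Set.mem_Icc] <;>
          constructor <;> linarith [hax.1, hax.2]
      · intro x y hxy
        right
        have hcne : C x ≠ C y := C.valid hxy
        have hax := ha x; have hay := ha y
        by_cases hcx : C x = 0 <;> by_cases hcy : C y = 0
        · exact absurd (hcx.trans hcy.symm) hcne
        · simp only [hηdef, hcx, hcy, if_pos, if_neg, not_false_iff]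
          refine lt_abs.mpr (Or.inr ?_)
          rw [hδdef] at hδ6 hax hay; linarith [hax.1, hax.2, hay.1, hay.2]
        · simp only [hηdef, hcx, hcy, if_pos, if_neg, not_false_iff]
          refine lt_abs.mpr (Or.inl ?_)
          rw [hδdef] at hδ6 hax hay; linarith [hax.1, hax.2, hay.1, hay.2]
        · exfalso
          have : C x = C y := by
            have h2' : (C x : Fin 2) = 1 := by omega
            have h2'' : (C y : Fin 2) = 1 := by omega
            rw [h2', h2'']
          exact hcne this
      · rw [hrange, Finset.card_image_of_injective _ hinj, Finset.card_univ]
    rw [hoi]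
    exact le_antisymm (csSup_le hne hbdd) (le_csSup ⟨Fintype.card V, fun n hn => hbdd n hn⟩ hmem)
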